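/- The function u(x,y) = log((√(x² + y²) + y)/x), defined on the quarter-plane {(x,y) : x > 0, y > 0}, satisfies the minimal vertical graph equation (1 + y²u_x²)u_yy + (1 + y²u_y²)u_xx − 2y²u_x u_y u_xy − y u_y(u_x² + u_y²) = 0. -/

import Mathlib

noncomputable def px (u : ℝ → ℝ → ℝ) (x y : ℝ) : ℝ := deriv (fun x' => u x' y) x
noncomputable def py (u : ℝ → ℝ → ℝ) (x y : ℝ) : ℝ := deriv (fun y' => u x y') y
noncomputable def pxx (u : ℝ → ℝ → ℝ) (x y : ℝ) : ℝ := deriv (fun x' => px u x' y) x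
noncomputable def pyy (u : ℝ → ℝ → ℝ) (x y : ℝ) : ℝ := deriv (fun y' => py u x y') y
noncomputable def pxy (u : ℝ → ℝ → ℝ) (x y : ℝ) : ℝ := deriv (fun y' => px u x y') y

/-- The minimal vertical graph equation in the upper half-plane model of `ℍ²`. -/
def MinimalEqHalfPlane (u : ℝ → ℝ → ℝ) (x y : ℝ) : Prop :=
  (1 + y ^ 2 * (px u x y) ^ 2) * pyy u x y + (1 + y ^ 2 * (py u x y) ^ 2) * pxx u x y
    - 2 * y ^ 2 * px u x y * py u x y * pxy u x y
    - y * py u x y * ((px u x y) ^ 2 + (py u x y) ^ 2) = 0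

noncomputable def U : ℝ → ℝ → ℝ := fun x y => Real.log ((Real.sqrt (x ^ 2 + y ^ 2) + y) / x)

lemma sqrt_add_pos {x : ℝ} (y : ℝ) (hx : 0 < x) : 0 < Real.sqrt (x ^ 2 + y ^ 2) + y := by
  have h1 : |y| < Real.sqrt (x ^ 2 + y ^ 2) := by
    rw [← Real.sqrt_sq_eq_abs]
    exact Real.sqrt_lt_sqrt (sq_nonneg y) (by nlinarith)
  have := neg_abs_le y
  linarith

lemma hsqx (y : ℝ) {x : ℝ} (hx : 0 < x) :
    HasDerivAt (fun x' : ℝ => Real.sqrt (x' ^ 2 + y ^ 2))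
      (1 / (2 * Real.sqrt (x ^ 2 + y ^ 2)) * (2 * x)) x := by
  have h1 : HasDerivAt (fun x' : ℝ => x' ^ 2 + y ^ 2) (2 * x) x := by
    simpa using (hasDerivAt_pow 2 x).add_const (y ^ 2)
  exact (Real.hasDerivAt_sqrt (by positivity)).comp x h1

lemma hsqy {x : ℝ} (y : ℝ) (hx : 0 < x) :
    HasDerivAt (fun y' : ℝ => Real.sqrt (x ^ 2 + y' ^ 2))
      (1 / (2 * Real.sqrt (x ^ 2 + y ^ 2)) * (2 * y)) y := by
  have h1 : HasDerivAt (fun y' : ℝ => x ^ 2 + y' ^ 2) (2 * y) y := by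
    simpa using (hasDerivAt_pow 2 y).const_add (x ^ 2)
  exact (Real.hasDerivAt_sqrt (by positivity)).comp y h1

lemma hux (y : ℝ) {x : ℝ} (hx : 0 < x) :
    HasDerivAt (fun x' => Real.log ((Real.sqrt (x' ^ 2 + y ^ 2) + y) / x'))
      (-y / (x * Real.sqrt (x ^ 2 + y ^ 2))) x := by
  have hspos : 0 < Real.sqrt (x ^ 2 + y ^ 2) := Real.sqrt_pos.2 (by positivity)
  have hs2 : Real.sqrt (x ^ 2 + y ^ 2) ^ 2 = x ^ 2 + y ^ 2 := Real.sq_sqrt (by positivity)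
  have hsy : 0 < Real.sqrt (x ^ 2 + y ^ 2) + y := sqrt_add_pos y hx
  have h5 := ((hsqx y hx).add_const y).div (hasDerivAt_id x) (ne_of_gt hx)
  have h6 := h5.log (ne_of_gt (div_pos hsy hx))
  convert h6 using 1
  · rfl
  simp only [Pi.div_apply, Pi.add_apply, id_eq]
  set s := Real.sqrt (x ^ 2 + y ^ 2)
  field_simp
  linear_combination hs2

lemma huy {x : ℝ} (y : ℝ) (hx : 0 < x) :
    HasDerivAt (fun y' => Real.log ((Real.sqrt (x ^ 2 + y' ^ 2) + y') / x))
      (1 / Real.sqrt (x ^ 2 + y ^ 2)) y := by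
  have hspos : 0 < Real.sqrt (x ^ 2 + y ^ 2) := Real.sqrt_pos.2 (by positivity)
  have hs2 : Real.sqrt (x ^ 2 + y ^ 2) ^ 2 = x ^ 2 + y ^ 2 := Real.sq_sqrt (by positivity)
  have hsy : 0 < Real.sqrt (x ^ 2 + y ^ 2) + y := sqrt_add_pos y hx
  have h5 := ((hsqy y hx).add (hasDerivAt_id y)).div_const x
  have h6 := h5.log (ne_of_gt (div_pos hsy hx))
  convert h6 using 1
  · rfl
  simp only [Pi.div_apply, Pi.add_apply, id_eq]
  set s := Real.sqrt (x ^ 2 + y ^ 2)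
  field_simp
  ring

lemma px_eq (y : ℝ) {x : ℝ} (hx : 0 < x) :
    px U x y = -y / (x * Real.sqrt (x ^ 2 + y ^ 2)) := by
  unfold px U
  exact (hux y hx).deriv

lemma py_eq {x : ℝ} (y : ℝ) (hx : 0 < x) :
    py U x y = 1 / Real.sqrt (x ^ 2 + y ^ 2) := by
  unfold py U
  exact (huy y hx).deriv

lemma pxx_eq (y : ℝ) {x : ℝ} (hx : 0 < x) :
    pxx U x y = y * (Real.sqrt (x ^ 2 + y ^ 2) ^ 2 + x ^ 2)
      / (x ^ 2 * Real.sqrt (x ^ 2 + y ^ 2) ^ 3) := by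
  have hspos : 0 < Real.sqrt (x ^ 2 + y ^ 2) := Real.sqrt_pos.2 (by positivity)
  have hE : (fun x' => px U x' y) =ᶠ[nhds x]
      fun x' => -y / (x' * Real.sqrt (x' ^ 2 + y ^ 2)) := by
    filter_upwards [eventually_gt_nhds hx] with x' hx' using px_eq y hx'
  have hg : HasDerivAt (fun x' : ℝ => x' * Real.sqrt (x' ^ 2 + y ^ 2))
      (1 * Real.sqrt (x ^ 2 + y ^ 2) + x * (1 / (2 * Real.sqrt (x ^ 2 + y ^ 2)) * (2 * x))) x :=
    (hasDerivAt_id x).mul (hsqx y hx)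
  have hdiv : HasDerivAt (fun x' => -y / (x' * Real.sqrt (x' ^ 2 + y ^ 2))) _ x :=
    (hasDerivAt_const x (-y)).div hg (by positivity)
  unfold pxx
  rw [hE.deriv_eq, hdiv.deriv]
  set s := Real.sqrt (x ^ 2 + y ^ 2)
  field_simp
  ring

lemma pyy_eq {x : ℝ} (y : ℝ) (hx : 0 < x) :
    pyy U x y = -y / Real.sqrt (x ^ 2 + y ^ 2) ^ 3 := by
  have hspos : 0 < Real.sqrt (x ^ 2 + y ^ 2) := Real.sqrt_pos.2 (by positivity)
  have hE : (fun y' => py U x y') = fun y' => 1 / Real.sqrt (x ^ 2 + y' ^ 2) :=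
    funext fun y' => py_eq y' hx
  have hdiv : HasDerivAt (fun y' => 1 / Real.sqrt (x ^ 2 + y' ^ 2)) _ y :=
    (hasDerivAt_const y (1 : ℝ)).div (hsqy y hx) hspos.ne'
  unfold pyy
  rw [hE, hdiv.deriv]
  set s := Real.sqrt (x ^ 2 + y ^ 2)
  field_simp
  ring

lemma pxy_eq {x : ℝ} (y : ℝ) (hx : 0 < x) :
    pxy U x y = -x / Real.sqrt (x ^ 2 + y ^ 2) ^ 3 := by
  have hspos : 0 < Real.sqrt (x ^ 2 + y ^ 2) := Real.sqrt_pos.2 (by positivity)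
  have hE : (fun y' => px U x y') = fun y' => -y' / (x * Real.sqrt (x ^ 2 + y' ^ 2)) :=
    funext fun y' => px_eq y' hx
  have hnum : HasDerivAt (fun y' : ℝ => -y') (-1) y := (hasDerivAt_id y).neg
  have hden : HasDerivAt (fun y' : ℝ => x * Real.sqrt (x ^ 2 + y' ^ 2))
      (x * (1 / (2 * Real.sqrt (x ^ 2 + y ^ 2)) * (2 * y))) y :=
    (hsqy y hx).const_mul x
  have hdiv : HasDerivAt (fun y' => -y' / (x * Real.sqrt (x ^ 2 + y' ^ 2))) _ y :=
    hnum.div hden (by positivity)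
  unfold pxy
  rw [hE, hdiv.deriv]
  set s := Real.sqrt (x ^ 2 + y ^ 2)
  have hs2 : s ^ 2 = x ^ 2 + y ^ 2 := Real.sq_sqrt (by positivity)
  field_simp
  linear_combination (-1)*hs2

/-- `u(x,y) = log((√(x²+y²) + y)/x)` satisfies the minimal vertical graph
equation on the quarter-plane `{x > 0, y > 0}`. -/
theorem stmt_9 :
    ∀ x y : ℝ, 0 < x → 0 < y →
      MinimalEqHalfPlane
        (fun x y => Real.log ((Real.sqrt (x ^ 2 + y ^ 2) + y) / x)) x y := by
  intro x y hx hy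
  have hspos : 0 < Real.sqrt (x ^ 2 + y ^ 2) := Real.sqrt_pos.2 (by positivity)
  have hs2 : Real.sqrt (x ^ 2 + y ^ 2) ^ 2 = x ^ 2 + y ^ 2 := Real.sq_sqrt (by positivity)
  show MinimalEqHalfPlane U x y
  unfold MinimalEqHalfPlane
  rw [px_eq y hx, py_eq y hx, pxx_eq y hx, pyy_eq y hx, pxy_eq y hx]
  set s := Real.sqrt (x ^ 2 + y ^ 2)
  field_simp
  linear_combination (y*(s^2+y^2))*hs2
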